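/- Tightness of the length upper bound for TFS: suppose k ≥ 2, every length-(k−1) string over Σ occurs exactly once as a substring of W (W is an order-(k−1) de Bruijn sequence over Σ), n−k is even, and S = {1,3,5,…,n−k−1}. Then every string X over Σ∪{#} satisfying properties C1, P1 and P2 has length |X| ≥ ⌈(n−k+1)/2⌉·k + ⌊(n−k+1)/2⌋. -/

import Mathlib

/-- Number of occurrences (starting positions) of `P` as a substring of `T`. -/
def strFreq {α : Type*} [DecidableEq α] (T P : List α) : ℕ :=
  ((Finset.range (T.length + 1 - P.length)).filter
    (fun i => (T.drop i).take P.length = P)).card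

/-- Strings over `Σ ∪ {#}` are modelled as lists over `Option α`, where `none` is the
separator `#` and `some a` (for `a : α`) is a letter of `Σ`.
`IUset W S k U` is the set `I_U` of positions `i` of `U` such that `U[i..i+k−1]` is a
length-`k` string over `Σ` which is not a sensitive pattern (a sensitive pattern being a
string of the form `W[j..j+k−1]` with `j ∈ S`). -/
def IUset {α : Type*} [DecidableEq α] (W : List α) (S : Finset ℕ) (k : ℕ)
    (U : List (Option α)) : Finset ℕ :=
  (Finset.range (U.length + 1 - k)).filter (fun i =>
    (∀ x ∈ (U.drop i).take k, x ≠ none) ∧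
    ¬ ∃ j ∈ S, ((U.drop i).take k).reduceOption = (W.drop j).take k)

/-- Property C1: no sensitive pattern occurs in `U`. -/
def PropC1 {α : Type*} [DecidableEq α] (W : List α) (S : Finset ℕ) (k : ℕ)
    (U : List (Option α)) : Prop :=
  ∀ j ∈ S, ¬ ((((W.drop j).take k).map some) <:+: U)

/-- Property P1 (t-chain equivalence `I_W ≡ I_U`): the two sets of positions have the same
cardinality and, for every `j`, the length-`k` substring of `U` at the `j`-th smallest
position of `I_U` equals the length-`k` substring of `W` at the `j`-th smallest position
of `I_W`. -/
def PropP1 {α : Type*} [DecidableEq α] (W : List α) (S : Finset ℕ) (k : ℕ)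
    (U : List (Option α)) : Prop :=
  (IUset W S k (W.map some)).card = (IUset W S k U).card ∧
  ∀ j < (IUset W S k (W.map some)).card,
    (U.drop (((IUset W S k U).sort (· ≤ ·)).getD j 0)).take k =
    ((W.map some).drop (((IUset W S k (W.map some)).sort (· ≤ ·)).getD j 0)).take k

/-- Property P2: every length-`k` string over `Σ` that is not a sensitive pattern occurs
equally often in `U` and in `W`. -/
def PropP2 {α : Type*} [DecidableEq α] (W : List α) (S : Finset ℕ) (k : ℕ)
    (U : List (Option α)) : Prop :=
  ∀ P : List α, P.length = k → (∀ j ∈ S, P ≠ (W.drop j).take k) →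
    strFreq U (P.map some) = strFreq W P

/-- `i` is the p-predecessor of `j` in the set of positions `F` (w.r.t. the string `U`):
`i` is the largest element of `F` smaller than `j`, and the length-`k` substrings of `U`
at `i` and `j` have a suffix-prefix overlap of length `k−1`. -/
def IsPPred {α : Type*} (U : List (Option α)) (k : ℕ) (F : Finset ℕ) (i j : ℕ) : Prop :=
  i ∈ F ∧ j ∈ F ∧ i < j ∧ (∀ m ∈ F, m < j → m ≤ i) ∧
  (U.drop (i + 1)).take (k - 1) = (U.drop j).take (k - 1)

/-- A p-chain of `F`: a subset `J ⊆ F` such that every element of `J` other than its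
minimum has its p-predecessor in `J`. -/
def IsPChain {α : Type*} (U : List (Option α)) (k : ℕ) (F : Finset ℕ)
    (J : Finset ℕ) : Prop :=
  J ⊆ F ∧ ∀ x ∈ J, (∀ y ∈ J, x ≤ y) ∨ ∃ i ∈ J, IsPPred U k F i x

/-- Equivalence of chains: same cardinality, and position-wise (in increasing order) the
length-`k` substrings agree. -/
def ChainEquiv {α : Type*} [DecidableEq α] (U V : List (Option α)) (k : ℕ)
    (JU JV : Finset ℕ) : Prop :=
  JU.card = JV.card ∧
  ∀ j < JU.card,
    (U.drop ((JU.sort (· ≤ ·)).getD j 0)).take k =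
    (V.drop ((JV.sort (· ≤ ·)).getD j 0)).take k

/-- Property Π1: there is an injective map from the p-chains of `I_W` to the p-chains of
`I_U` sending every p-chain to an equivalent one. -/
def PropPi1 {α : Type*} [DecidableEq α] (W : List α) (S : Finset ℕ) (k : ℕ)
    (U : List (Option α)) : Prop :=
  ∃ f : {J : Finset ℕ // IsPChain (W.map some) k (IUset W S k (W.map some)) J} →
        {J : Finset ℕ // IsPChain U k (IUset W S k U) J},
    Function.Injective f ∧
    ∀ J, ChainEquiv (W.map some) U k J.1 (f J).1

lemma reduceOption_map_some'' {α : Type*} (l : List α) : (l.map some).reduceOption = l := by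
  induction l with
  | nil => rfl
  | cons a t ih => simp [List.reduceOption_cons_of_some, ih]

lemma map_some_reduceOption'' {α : Type*} (l : List (Option α)) (h : ∀ x ∈ l, x ≠ none) :
    l.reduceOption.map some = l := by
  induction l with
  | nil => rfl
  | cons a t ih =>
    cases a with
    | none => exact absurd rfl (h none (by simp))
    | some b =>
      simp only [List.reduceOption_cons_of_some, List.map_cons]
      rw [ih (fun x hx => h x (by simp [hx]))]

lemma mem_drop_take'' {α : Type*} {l : List α} {i k : ℕ} {x : α} :
    x ∈ (l.drop i).take k ↔ ∃ t, t < k ∧ ∃ h : i + t < l.length, l[i + t] = x := by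
  constructor
  · intro hx
    rw [List.mem_iff_getElem] at hx
    obtain ⟨t, ht, hval⟩ := hx
    have ht' : t < k ∧ i + t < l.length := by
      simp only [List.length_take, List.length_drop, lt_min_iff] at ht; omega
    refine ⟨t, ht'.1, ht'.2, ?_⟩
    rw [List.getElem_take, List.getElem_drop] at hval
    exact hval
  · rintro ⟨t, htk, hlt, rfl⟩
    rw [List.mem_iff_getElem]
    refine ⟨t, by simp only [List.length_take, List.length_drop, lt_min_iff]; omega, ?_⟩
    rw [List.getElem_take, List.getElem_drop]

lemma unique_sub'' {α : Type*} [DecidableEq α] (W : List α) (n k : ℕ) (hn : W.length = n)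
    (hdB : ∀ P : List α, P.length = k - 1 → strFreq W P = 1)
    {i j : ℕ} (hi : i + (k - 1) ≤ n) (hj : j + (k - 1) ≤ n) (hk : 1 ≤ k)
    (h : (W.drop i).take (k - 1) = (W.drop j).take (k - 1)) : i = j := by
  set P := (W.drop i).take (k - 1) with hP
  have hPlen : P.length = k - 1 := by
    simp only [hP, List.length_take, List.length_drop]; omega
  have h1 := hdB P hPlen
  rw [strFreq, Finset.card_eq_one] at h1
  obtain ⟨a, ha⟩ := h1
  have hmi : i ∈ (Finset.range (W.length + 1 - P.length)).filter
      (fun t => (W.drop t).take P.length = P) := by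
    rw [Finset.mem_filter, Finset.mem_range, hPlen, hn]
    exact ⟨by omega, hP.symm⟩
  have hmj : j ∈ (Finset.range (W.length + 1 - P.length)).filter
      (fun t => (W.drop t).take P.length = P) := by
    rw [Finset.mem_filter, Finset.mem_range, hPlen, hn]
    exact ⟨by omega, h.symm⟩
  rw [ha, Finset.mem_singleton] at hmi hmj
  omega

lemma unique_subk'' {α : Type*} [DecidableEq α] (W : List α) (n k : ℕ) (hn : W.length = n)
    (hdB : ∀ P : List α, P.length = k - 1 → strFreq W P = 1) (hk : 1 ≤ k) (hkn : k ≤ n)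
    {i j : ℕ} (hi : i ≤ n - k) (hj : j ≤ n - k)
    (h : (W.drop i).take k = (W.drop j).take k) : i = j := by
  apply unique_sub'' W n k hn hdB (by omega) (by omega) hk
  have h2 := congrArg (List.take (k - 1)) h
  rwa [List.take_take, List.take_take, min_eq_left (by omega)] at h2

/-- tightness of the TFS length upper bound: if `k ≥ 2`, every
length-`(k−1)` string over `Σ` occurs exactly once as a substring of `W` (an
order-`(k−1)` de Bruijn sequence), `n − k` is even, and `S = {1,3,5,…,n−k−1}`, then
every string `X` over `Σ ∪ {#}` satisfying C1, P1 and P2 has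
`|X| ≥ ⌈(n−k+1)/2⌉·k + ⌊(n−k+1)/2⌋`. -/
theorem stmt7 {α : Type*} [Fintype α] [DecidableEq α] (W : List α) (n k : ℕ)
    (hn : W.length = n) (hk : 2 ≤ k) (hkn : k < n)
    (hdeBruijn : ∀ P : List α, P.length = k - 1 → strFreq W P = 1)
    (heven : Even (n - k))
    (S : Finset ℕ) (hS : S = (Finset.range (n - k)).filter (fun i => i % 2 = 1)) :
    ∀ X : List (Option α), PropC1 W S k X → PropP1 W S k X → PropP2 W S k X →
      ((n - k + 2) / 2) * k + (n - k + 1) / 2 ≤ X.length := by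
  obtain ⟨c, hc⟩ := heven
  intro X hC1 hP1 _hP2
  set m := c + 1 with hm
  have hWlen : (W.map some).length = n := by simp [hn]
  have hSmem : ∀ j, j ∈ S ↔ (j < n - k ∧ j % 2 = 1) := by
    intro j; rw [hS, Finset.mem_filter, Finset.mem_range]
  -- characterize I_W
  have hIW : IUset W S k (W.map some) = (Finset.range m).image (fun t => 2 * t) := by
    ext i
    simp only [IUset, Finset.mem_filter, Finset.mem_range, Finset.mem_image, hWlen]
    constructor
    · rintro ⟨hir, -, hns⟩
      have hev : i % 2 = 0 := by
        by_contra hodd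
        apply hns
        refine ⟨i, (hSmem i).2 ⟨by omega, by omega⟩, ?_⟩
        rw [← List.map_drop, ← List.map_take, reduceOption_map_some'']
      exact ⟨i / 2, by omega, by omega⟩
    · rintro ⟨t, ht, rfl⟩
      refine ⟨by omega, ?_, ?_⟩
      · intro x hx
        rw [← List.map_drop, ← List.map_take] at hx
        simp only [List.mem_map] at hx
        obtain ⟨y, -, rfl⟩ := hx
        simp
      · rintro ⟨j, hjS, hEq⟩
        rw [← List.map_drop, ← List.map_take, reduceOption_map_some''] at hEq
        rw [hSmem] at hjS
        have h2t := unique_subk'' W n k hn hdeBruijn (by omega) (by omega)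
          (i := 2 * t) (j := j) (by omega) (by omega) hEq
        omega
  have hinj2 : Function.Injective (fun t : ℕ => 2 * t) := fun a b h => by
    simp only at h; omega
  have hcardW : (IUset W S k (W.map some)).card = m := by
    rw [hIW, Finset.card_image_of_injective _ hinj2, Finset.card_range]
  -- sorted list of I_W
  have hsortW : (IUset W S k (W.map some)).sort (· ≤ ·)
      = (List.range m).map (fun t => 2 * t) := by
    have hperm : List.Perm ((IUset W S k (W.map some)).sort (· ≤ ·))
        ((List.range m).map (fun t => 2 * t)) := by
      rw [List.perm_ext_iff_of_nodup (Finset.sort_nodup _ _)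
        ((List.nodup_range (n := m)).map hinj2)]
      intro a
      simp only [Finset.mem_sort, hIW, Finset.mem_image, Finset.mem_range,
        List.mem_map, List.mem_range]
    exact List.Perm.eq_of_pairwise' (Finset.pairwise_sort _ _)
      (List.Pairwise.map _ (fun a b (h : a ≤ b) => by omega) (List.pairwise_le_range (n := m))) hperm
  have hgetW : ∀ j, j < m → ((IUset W S k (W.map some)).sort (· ≤ ·)).getD j 0 = 2 * j := by
    intro j hj
    rw [hsortW, List.getD_eq_get (l := (List.range m).map (fun t => 2 * t)) (i := ⟨j, by simpa using hj⟩)]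
    simp
  obtain ⟨hcard, hsubs⟩ := hP1
  set LX := (IUset W S k X).sort (· ≤ ·) with hLX
  have hLXlen : LX.length = m := by
    rw [hLX, Finset.length_sort, ← hcard, hcardW]
  have hXsub : ∀ j, j < m → (X.drop (LX.getD j 0)).take k
      = ((W.drop (2 * j)).take k).map some := by
    intro j hj
    have h2 := hsubs j (by omega)
    rw [hgetW j hj] at h2
    rw [h2, ← List.map_drop, ← List.map_take]
  have hmemLX : ∀ j, j < m → LX.getD j 0 ∈ IUset W S k X := by
    intro j hj
    rw [List.getD_eq_get (l := LX) (i := ⟨j, by omega⟩)]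
    exact (Finset.mem_sort (α := ℕ) (· ≤ ·)).1 (List.get_mem LX ⟨j, by omega⟩)
  have hIXmem : ∀ i ∈ IUset W S k X,
      (i + k ≤ X.length ∧ ∀ x ∈ (X.drop i).take k, x ≠ none) := by
    intro i hi
    simp only [IUset, Finset.mem_filter, Finset.mem_range] at hi
    exact ⟨by omega, hi.2.1⟩
  have hsm := List.SortedLT.strictMono_get (Finset.sortedLT_sort (IUset W S k X))
  -- the gap lemma
  have hgap : ∀ j, j + 1 < m → LX.getD j 0 + (k + 1) ≤ LX.getD (j + 1) 0 := by
    intro j hj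
    have hjm : j < LX.length := by omega
    have hj1m : j + 1 < LX.length := by omega
    have hab : LX.getD j 0 < LX.getD (j + 1) 0 := by
      rw [List.getD_eq_get (i := ⟨j, hjm⟩), List.getD_eq_get (i := ⟨j + 1, hj1m⟩)]
      exact hsm (by simp [Fin.lt_def])
    have hXa := hXsub j (by omega)
    have hXb := hXsub (j + 1) hj
    obtain ⟨hak, hanone⟩ := hIXmem _ (hmemLX j (by omega))
    obtain ⟨hbk, hbnone⟩ := hIXmem _ (hmemLX (j + 1) hj)
    by_contra hlt
    push_neg at hlt
    set a := LX.getD j 0 with hadef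
    set b := LX.getD (j + 1) 0 with hbdef
    rcases eq_or_lt_of_le (show a + 1 ≤ b by omega) with hb1 | hb2
    · -- b = a + 1 : de Bruijn overlap contradiction
      have e1 := congrArg (List.drop 1) hXa
      rw [List.drop_take, List.drop_drop, ← List.map_drop, List.drop_take,
        List.drop_drop] at e1
      have e2 := congrArg (List.take (k - 1)) hXb
      rw [List.take_take, min_eq_left (by omega), ← List.map_take, List.take_take,
        min_eq_left (by omega)] at e2
      rw [← hb1] at e2
      rw [e2] at e1
      have e3 := List.map_injective_iff.2 (Option.some_injective α) e1
      have := unique_sub'' W n k hn hdeBruijn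
        (i := 2 * (j + 1)) (j := 2 * j + 1) (by omega) (by omega) (by omega) e3
      omega
    · -- a + 1 < b ≤ a + k : a+1 would be in I_X
      have hnone' : ∀ x ∈ (X.drop (a + 1)).take k, x ≠ none := by
        intro x hx
        rw [mem_drop_take''] at hx
        obtain ⟨t, htk, hlt', hval⟩ := hx
        by_cases htc : t < k - 1
        · apply hanone x
          rw [mem_drop_take'']
          exact ⟨t + 1, by omega, by omega, by rw [← hval]; congr 1; omega⟩
        · apply hbnone x
          rw [mem_drop_take'']
          exact ⟨a + 1 + t - b, by omega, by omega, by rw [← hval]; congr 1; omega⟩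
      have hinf : (X.drop (a + 1)).take k <:+: X :=
        (List.take_prefix _ _).isInfix.trans (List.drop_suffix _ _).isInfix
      have hnew : a + 1 ∈ IUset W S k X := by
        simp only [IUset, Finset.mem_filter, Finset.mem_range]
        refine ⟨by omega, hnone', ?_⟩
        rintro ⟨j', hj'S, hEq⟩
        have hms := map_some_reduceOption'' _ hnone'
        rw [hEq] at hms
        exact hC1 j' hj'S (by rw [← hms] at hinf; exact hinf)
      rw [← Finset.mem_sort (α := ℕ) (· ≤ ·), ← hLX] at hnew
      rw [List.mem_iff_get] at hnew
      obtain ⟨t, hval⟩ := hnew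
      rcases le_or_gt (t : ℕ) j with htj | htj
      · have : LX.get t ≤ LX.get ⟨j, hjm⟩ := hsm.monotone (by simp [Fin.le_def, htj])
        rw [hval, ← List.getD_eq_get (i := ⟨j, hjm⟩), ← hadef] at this
        omega
      · have : LX.get ⟨j + 1, hj1m⟩ ≤ LX.get t := hsm.monotone (by simp [Fin.le_def]; omega)
        rw [hval, ← List.getD_eq_get (i := ⟨j + 1, hj1m⟩), ← hbdef] at this
        omega
  -- chain the gaps
  have hchain : ∀ j, j < m → (k + 1) * j ≤ LX.getD j 0 := by
    intro j
    induction j with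
    | zero => simp
    | succ p ih =>
      intro hj
      have h1 := hgap p hj
      have h2 := ih (by omega)
      have h3 : (k + 1) * (p + 1) = (k + 1) * p + (k + 1) := by ring
      omega
  have hlast := hchain c (by omega)
  obtain ⟨hlk, -⟩ := hIXmem _ (hmemLX c (by omega))
  have hg1 : (n - k + 2) / 2 = c + 1 := by omega
  have hg2 : (n - k + 1) / 2 = c := by omega
  rw [hg1, hg2]
  have h4 : (c + 1) * k = k * c + k := by ring
  have h5 : (k + 1) * c = k * c + c := by ring
  omega
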